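/- A diagram pair (L₁, E₁, t) — where L₁, E₁ ⊆ [n] give column-1 leading and extra entries and t is the remaining diagram pair — is in RSVT(α) if and only if: (1) L₁ and E₁ are disjoint subsets of [n]; (2) L₁ ≤ supp(α); (3) letting L₁' be the row indices of leading cells in column 1 of t, for each e ∈ E₁ one has |(e,n] ∩ L₁| > |(e,n] ∩ L₁'|; and (4) t ∈ RSVT(M̄(α, L₁)), where M̄(α, L₁) is M(α, L₁) with each positive entry decreased by 1. -/

import Mathlib

/-- The `j`-th largest element (0-indexed) of a finite set of `Fin n`,
viewed as an element of `[n] = {1,...,n}` via `i ↦ i + 1`; `0` as default. -/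
def jthLargestF (n : ℕ) (S : Finset (Fin n)) (j : ℕ) : ℕ :=
  (((Finset.sort S (· ≤ ·)).reverse).map (fun i => (i : ℕ) + 1)).getD j 0

/-- The `j`-th smallest element (0-indexed), similarly. -/
def jthSmallestF (n : ℕ) (S : Finset (Fin n)) (j : ℕ) : ℕ :=
  ((Finset.sort S (· ≤ ·)).map (fun i => (i : ℕ) + 1)).getD j 0

/-- Order on subsets of `[n]`: equal cardinality and `j`-th largest elements compare. -/
def setLEF (n : ℕ) (S T : Finset (Fin n)) : Prop :=
  S.card = T.card ∧ ∀ j < S.card, jthLargestF n S j ≤ jthLargestF n T j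

/-- The `c`-th column of the key tableau of the weak composition `α`: `{i : α i ≥ c}`. -/
def col (n : ℕ) (α : Fin n → ℕ) (c : ℕ) : Finset (Fin n) :=
  Finset.univ.filter (fun i => c ≤ α i)

/-- The support of a weak composition. -/
def suppC (n : ℕ) (α : Fin n → ℕ) : Finset (Fin n) :=
  Finset.univ.filter (fun i => 0 < α i)

/-- Bruhat order on weak compositions: key tableaux have the same shape and
compare entry-wise, expressed column by column. -/
def bruhatLE (n : ℕ) (γ α : Fin n → ℕ) : Prop :=
  ∀ c : ℕ, 1 ≤ c → setLEF n (col n γ c) (col n α c)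

/-- `μ` is the Bruhat-minimum of `{γ : γ ≥ α, supp γ ⊆ S}`. -/
def isBruhatMin (n : ℕ) (α : Fin n → ℕ) (S : Finset (Fin n)) (μ : Fin n → ℕ) : Prop :=
  bruhatLE n α μ ∧ suppC n μ ⊆ S ∧
    ∀ γ : Fin n → ℕ, bruhatLE n α γ → suppC n γ ⊆ S → bruhatLE n μ γ

/-- `μ` is the Bruhat-maximum of `{γ : γ ≤ α, supp γ ⊆ S}`. -/
def isBruhatMax (n : ℕ) (α : Fin n → ℕ) (S : Finset (Fin n)) (μ : Fin n → ℕ) : Prop :=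
  bruhatLE n μ α ∧ suppC n μ ⊆ S ∧
    ∀ γ : Fin n → ℕ, bruhatLE n γ α → suppC n γ ⊆ S → bruhatLE n γ μ

/-- `γ` is obtained from `α` by a single left swap: exchange parts `α i < α j` with `i < j`. -/
def leftSwapStep (n : ℕ) (γ α : Fin n → ℕ) : Prop :=
  ∃ i j : Fin n, i < j ∧ α i < α j ∧ γ = fun k => α (Equiv.swap i j k)

/-- The left swap order: reflexive-transitive closure of single left swaps. -/
def leftSwapLE (n : ℕ) (γ α : Fin n → ℕ) : Prop :=
  Relation.ReflTransGen (leftSwapStep n) γ α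

/-- `B = C ◁ A`: there is a strictly increasing choice `b` of elements of `C`,
`b k` being the smallest element of `C` that is `≥` the `k`-th smallest element
of `A` and exceeds all previously chosen elements, with `B` the set of chosen elements. -/
def isLhd (n : ℕ) (C A B : Finset (Fin n)) : Prop :=
  ∃ b : Fin A.card → Fin n, StrictMono b ∧ (∀ k, b k ∈ C) ∧
    (∀ k : Fin A.card, jthSmallestF n A k ≤ (b k : ℕ) + 1) ∧
    (∀ k : Fin A.card, ∀ c ∈ C, jthSmallestF n A k ≤ (c : ℕ) + 1 →
      (∀ j : Fin A.card, j < k → b j < c) → b k ≤ c) ∧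
    B = Finset.image b Finset.univ

/-- `lhdChain [C₁, ..., C_k] B` means `B = C₁ ◁ (C₂ ◁ (⋯ ◁ C_k))`. -/
def lhdChain (n : ℕ) : List (Finset (Fin n)) → Finset (Fin n) → Prop
  | [], B => B = ∅
  | [C], B => B = C
  | C :: D :: rest, B => ∃ B', lhdChain n (D :: rest) B' ∧ isLhd n C B' B

/-- `T ∈ RSSYT(α)`: a reverse semistandard Young tableau of shape `α⁺`, encoded by its
columns (strictly decreasing sets, rows weakly decreasing), whose left key is
entry-wise at most `key α`. -/
def memRSSYT (n : ℕ) (α : Fin n → ℕ) (T : ℕ → Finset (Fin n)) : Prop :=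
  (∀ c, 1 ≤ c → (T c).card = (col n α c).card) ∧
  (∀ c, 1 ≤ c → ∀ k < (T (c+1)).card, jthLargestF n (T (c+1)) k ≤ jthLargestF n (T c) k) ∧
  (∀ c, 1 ≤ c → ∃ B, lhdChain n ((List.range c).map (fun i => T (i+1))) B ∧
    setLEF n B (col n α c))

/-- `(L, E) ∈ RSVT(α)`: a reverse set-valued tableau of shape `α⁺` encoded as a diagram
pair by columns: `L c` the leading entries and `E c` the extra entries of column `c`,
with left key (of the leading tableau) entry-wise at most `key α`. -/
def memRSVT (n : ℕ) (α : Fin n → ℕ) (L E : ℕ → Finset (Fin n)) : Prop :=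
  (∀ c, 1 ≤ c → Disjoint (L c) (E c)) ∧
  (∀ c, 1 ≤ c → (L c).card = (col n α c).card) ∧
  (∀ c, 1 ≤ c → ∀ k < (L (c+1)).card, jthLargestF n (L (c+1)) k ≤ jthLargestF n (L c) k) ∧
  (∀ c, 1 ≤ c → ∀ e ∈ E c,
    ((L (c+1)).filter (fun l => e < l)).card < ((L c).filter (fun l => e < l)).card) ∧
  (∀ c, 1 ≤ c → ∃ B, lhdChain n ((List.range c).map (fun i => L (i+1))) B ∧
    setLEF n B (col n α c))

/-- `(L, E)` is a valid reverse set-valued tableau (of some shape), without any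
left-key condition. -/
def isValidRSVT (n : ℕ) (L E : ℕ → Finset (Fin n)) : Prop :=
  (∀ c, 1 ≤ c → Disjoint (L c) (E c)) ∧
  (∀ c, 1 ≤ c → (L (c+1)).card ≤ (L c).card) ∧
  (∃ N, ∀ c, N ≤ c → L c = ∅ ∧ E c = ∅) ∧
  (∀ c, 1 ≤ c → ∀ k < (L (c+1)).card, jthLargestF n (L (c+1)) k ≤ jthLargestF n (L c) k) ∧
  (∀ c, 1 ≤ c → ∀ e ∈ E c,
    ((L (c+1)).filter (fun l => e < l)).card < ((L c).filter (fun l => e < l)).card)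

/-- `j`-th largest element of a finite set of naturals (0-indexed), default `0`. -/
def jthLargestN (S : Finset ℕ) (j : ℕ) : ℕ :=
  ((Finset.sort S (· ≤ ·)).reverse).getD j 0

/-- `j`-th smallest element of a finite set of naturals (0-indexed), default `0`. -/
def jthSmallestN (S : Finset ℕ) (j : ℕ) : ℕ :=
  (Finset.sort S (· ≤ ·)).getD j 0

namespace S16
open List

variable {n : ℕ}

def asc (S : Finset (Fin n)) : List (Fin n) := S.sort (· ≤ ·)
def dsc (S : Finset (Fin n)) : List (Fin n) := (S.sort (· ≤ ·)).reverse

lemma asc_sorted (S : Finset (Fin n)) : (asc S).Pairwise (· < ·) := List.sortedLT_iff_pairwise.1 (Finset.sortedLT_sort S)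

lemma dsc_sorted (S : Finset (Fin n)) : (dsc S).Pairwise (· > ·) := by
  rw [dsc, List.pairwise_reverse]; exact asc_sorted S

lemma asc_length (S : Finset (Fin n)) : (asc S).length = S.card := Finset.length_sort _

lemma dsc_length (S : Finset (Fin n)) : (dsc S).length = S.card := by
  rw [dsc, List.length_reverse]; exact Finset.length_sort _

lemma mem_asc {S : Finset (Fin n)} {x : Fin n} : x ∈ asc S ↔ x ∈ S := Finset.mem_sort _

lemma mem_dsc {S : Finset (Fin n)} {x : Fin n} : x ∈ dsc S ↔ x ∈ S := by
  rw [dsc, List.mem_reverse]; exact Finset.mem_sort _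

lemma sublist_of_subset_lt : ∀ (l₂ l₁ : List (Fin n)), l₁.Pairwise (· < ·) → l₂.Pairwise (· < ·) →
    (∀ x ∈ l₁, x ∈ l₂) → l₁ <+ l₂
  | _, [], _, _, _ => nil_sublist _
  | [], a :: l₁, _, _, h => absurd (h a (mem_cons_self)) (by simp)
  | b :: l₂, a :: l₁, h₁, h₂, h => by
    rcases mem_cons.1 (h a (mem_cons_self)) with rfl | ha
    · refine (sublist_of_subset_lt l₂ l₁ h₁.of_cons h₂.of_cons (fun x hx => ?_)).cons₂ a
      rcases mem_cons.1 (h x (mem_cons_of_mem _ hx)) with rfl | hxl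
      · exact absurd (rel_of_pairwise_cons h₁ hx) (lt_irrefl x)
      · exact hxl
    · have hba : b < a := rel_of_pairwise_cons h₂ ha
      refine (sublist_of_subset_lt l₂ (a :: l₁) h₁ h₂.of_cons (fun x hx => ?_)).cons b
      rcases mem_cons.1 (h x hx) with rfl | h'
      · rcases mem_cons.1 hx with rfl | hx'
        · exact absurd hba (lt_irrefl _)
        · exact absurd (hba.trans (rel_of_pairwise_cons h₁ hx')) (lt_irrefl _)
      · exact h'

lemma sublist_of_subset_gt (l₁ l₂ : List (Fin n)) (h₁ : l₁.Pairwise (· > ·))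
    (h₂ : l₂.Pairwise (· > ·)) (h : ∀ x ∈ l₁, x ∈ l₂) : l₁ <+ l₂ := by
  rw [← List.reverse_reverse l₁, ← List.reverse_reverse l₂]
  apply List.Sublist.reverse
  apply sublist_of_subset_lt
  · rw [List.pairwise_reverse]; exact h₁
  · rw [List.pairwise_reverse]; exact h₂
  · intro x hx; rw [List.mem_reverse] at *; exact h x hx

lemma asc_sublist_asc {S T : Finset (Fin n)} (h : S ⊆ T) : asc S <+ asc T :=
  sublist_of_subset_lt _ _ (asc_sorted S) (asc_sorted T) (fun x hx => mem_asc.2 (h (mem_asc.1 hx)))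

lemma dsc_sublist_dsc {S T : Finset (Fin n)} (h : S ⊆ T) : dsc S <+ dsc T :=
  sublist_of_subset_gt _ _ (dsc_sorted S) (dsc_sorted T) (fun x hx => mem_dsc.2 (h (mem_dsc.1 hx)))

lemma f2_trans : ∀ {l₁ l₂ l₃ : List (Fin n)}, Forall₂ (· ≤ ·) l₁ l₂ → Forall₂ (· ≤ ·) l₂ l₃ →
    Forall₂ (· ≤ ·) l₁ l₃ := by
  intro l₁ l₂ l₃ h₁ h₂
  induction h₁ generalizing l₃ with
  | nil => cases h₂; exact Forall₂.nil
  | cons hab h ih => cases h₂ with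
    | cons hbc h' => exact Forall₂.cons (le_trans hab hbc) (ih h')

lemma flatMap_val (l : List (Fin n)) : (l.flatMap fun a => [a.val]) = l.map Fin.val := by
  induction l with
  | nil => rfl
  | cons a t ih => simp [List.flatMap_cons, ih]

lemma jthL' (S : Finset (Fin n)) (j : ℕ) :
    jthLargestF n S j = (((Finset.sort S (· ≤ ·)).reverse).map (fun i => i.val + 1)).getD j 0 := by
  show (List.map (fun i => i + 1) ((Finset.sort S (· ≤ ·)).reverse.flatMap fun a => [(a.val : ℕ)])).getD j 0 = _
  rw [flatMap_val, List.map_map]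
  rfl

lemma jthS' (S : Finset (Fin n)) (j : ℕ) :
    jthSmallestF n S j = ((Finset.sort S (· ≤ ·)).map (fun i => i.val + 1)).getD j 0 := by
  show (List.map (fun i => i + 1) ((Finset.sort S (· ≤ ·)).flatMap fun a => [(a.val : ℕ)])).getD j 0 = _
  rw [flatMap_val, List.map_map]
  rfl

lemma jthL (S : Finset (Fin n)) (j : ℕ) (h : j < S.card) :
    jthLargestF n S j = ((dsc S)[j]'(by rw [dsc_length]; exact h) : Fin n).val + 1 := by
  rw [jthL', List.getD_eq_getElem _ _ (by rw [List.length_map, List.length_reverse, Finset.length_sort]; exact h), List.getElem_map]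
  rfl

lemma jthS (S : Finset (Fin n)) (j : ℕ) (h : j < S.card) :
    jthSmallestF n S j = ((asc S)[j]'(by rw [asc_length]; exact h) : Fin n).val + 1 := by
  rw [jthS', List.getD_eq_getElem _ _ (by rw [List.length_map, Finset.length_sort]; exact h), List.getElem_map]
  rfl

lemma setLEF_iff {S T : Finset (Fin n)} : setLEF n S T ↔ Forall₂ (· ≤ ·) (dsc S) (dsc T) := by
  rw [setLEF, List.forall₂_iff_get]
  constructor
  · rintro ⟨hcard, h⟩
    refine ⟨by rw [dsc_length, dsc_length, hcard], fun i h₁ h₂ => ?_⟩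
    have hi : i < S.card := by rwa [dsc_length] at h₁
    have := h i hi
    rw [jthL S i hi, jthL T i (by rwa [dsc_length] at h₂)] at this
    simp only [List.get_eq_getElem]
    exact Fin.le_def.2 (Nat.succ_le_succ_iff.1 this)
  · rintro ⟨hlen, h⟩
    have hcard : S.card = T.card := by rw [← dsc_length S, ← dsc_length T, hlen]
    refine ⟨hcard, fun j hj => ?_⟩
    rw [jthL S j hj, jthL T j (hcard ▸ hj)]
    have := h j (by rwa [dsc_length]) (by rw [dsc_length, ← hcard]; exact hj)
    simp only [List.get_eq_getElem] at this
    exact Nat.succ_le_succ (Fin.le_def.1 this)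

lemma setLEF_iff' {S T : Finset (Fin n)} : setLEF n S T ↔ Forall₂ (· ≤ ·) (asc S) (asc T) :=
  setLEF_iff.trans List.forall₂_reverse_iff

lemma setLEF_card {S T : Finset (Fin n)} (h : setLEF n S T) : S.card = T.card := h.1

lemma setLEF_trans {S T U : Finset (Fin n)} (h₁ : setLEF n S T) (h₂ : setLEF n T U) :
    setLEF n S U := setLEF_iff.2 (f2_trans (setLEF_iff.1 h₁) (setLEF_iff.1 h₂))

lemma setLEF_refl (S : Finset (Fin n)) : setLEF n S S := ⟨rfl, fun _ _ => le_rfl⟩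

lemma asc_toFinset {l : List (Fin n)} (h : l.Pairwise (· < ·)) : asc l.toFinset = l := by
  rw [asc]
  exact (List.toFinset_sort (· ≤ ·) h.nodup).2 (h.imp le_of_lt)

lemma dsc_toFinset {l : List (Fin n)} (h : l.Pairwise (· > ·)) : dsc l.toFinset = l := by
  have h' : l.reverse.Pairwise (· < ·) := by rw [List.pairwise_reverse]; exact h
  have := asc_toFinset h'
  rw [List.toFinset_reverse] at this
  rw [dsc, ← asc, this, List.reverse_reverse]

lemma sublist_get_le {l u : List (Fin n)} (h : l <+ u) (hu : u.Pairwise (· > ·)) :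
    ∀ j (hj : j < l.length) (hju : j < u.length), l[j]'hj ≤ u[j]'hju := by
  induction h with
  | slnil => intro j hj; simp at hj
  | @cons l u a h ih =>
    intro j hj hju
    have hjuu : j < u.length := lt_of_lt_of_le hj h.length_le
    match j with
    | 0 =>
      have hmem : l[0]'hj ∈ u := h.subset (List.getElem_mem _)
      simp only [List.getElem_cons_zero]
      exact le_of_lt (rel_of_pairwise_cons hu hmem)
    | j+1 =>
      have h1 : l[j+1]'hj ≤ u[j+1]'hjuu := ih hu.of_cons (j+1) hj hjuu
      have h2 : u[j+1]'hjuu < u[j]'(by omega) := by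
        have := List.pairwise_iff_get.1 hu.of_cons ⟨j, by omega⟩ ⟨j+1, hjuu⟩ (by simp)
        simpa using this
      simp only [List.getElem_cons_succ]
      exact le_of_lt (lt_of_le_of_lt h1 h2)
  | @cons_cons l u a h ih =>
    intro j hj hju
    match j with
    | 0 => simp
    | j+1 =>
      simp only [List.getElem_cons_succ]
      exact ih hu.of_cons j (by simpa using hj) (by simpa using hju)

end S16
namespace S16
open List

variable {n : ℕ}

/-- Greedy choice of the largest subset of `S` dominated by `T` (both descending). -/
def gmax : List (Fin n) → List (Fin n) → List (Fin n)
  | _, [] => []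
  | S, t :: T =>
    match S.dropWhile (fun s => decide (t < s)) with
    | [] => []
    | s :: rest => s :: gmax rest T
termination_by S T => T.length

/-- Greedy choice of the smallest subset of `C` dominating `A` (both ascending). -/
def gmin : List (Fin n) → List (Fin n) → List (Fin n)
  | _, [] => []
  | C, a :: A =>
    match C.dropWhile (fun c => decide (c < a)) with
    | [] => []
    | c :: rest => c :: gmin rest A
termination_by C A => A.length

lemma gmax_nil (S : List (Fin n)) : gmax S [] = [] := by simp [gmax]

lemma gmax_cons (S : List (Fin n)) (t : Fin n) (T : List (Fin n)) :
    gmax S (t :: T) = (match S.dropWhile (fun s => decide (t < s)) with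
      | [] => [] | s :: rest => s :: gmax rest T) := by
  rw [gmax]

lemma gmin_nil (C : List (Fin n)) : gmin C [] = [] := by simp [gmin]

lemma gmin_cons (C : List (Fin n)) (a : Fin n) (A : List (Fin n)) :
    gmin C (a :: A) = (match C.dropWhile (fun c => decide (c < a)) with
      | [] => [] | c :: rest => c :: gmin rest A) := by
  rw [gmin]

lemma mem_dropWhile_of_mem {p : Fin n → Bool} {S : List (Fin n)} {x : Fin n}
    (hx : x ∈ S) (hpx : p x = false) : x ∈ S.dropWhile p := by
  conv at hx => rw [← List.takeWhile_append_dropWhile (p := p) (l := S)]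
  rcases List.mem_append.1 hx with h | h
  · exact absurd (List.mem_takeWhile_imp h) (by simp [hpx])
  · exact h

lemma dropWhile_dropWhile {p q : Fin n → Bool} (hpq : ∀ x, p x = true → q x = true) :
    ∀ l : List (Fin n), l.dropWhile q = (l.dropWhile p).dropWhile q := by
  intro l
  induction l with
  | nil => rfl
  | cons x xs ih =>
    by_cases hp : p x = true
    · rw [List.dropWhile_cons_of_pos hp, List.dropWhile_cons_of_pos (hpq x hp), ih]
    · rw [List.dropWhile_cons_of_neg hp]

lemma head_dropWhile_false {p : Fin n → Bool} {s : Fin n} {rest : List (Fin n)} :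
    ∀ {S : List (Fin n)}, S.dropWhile p = s :: rest → p s = false := by
  intro S h
  induction S with
  | nil => simp at h
  | cons x xs ih =>
    by_cases hp : p x = true
    · rw [List.dropWhile_cons_of_pos hp] at h; exact ih h
    · rw [List.dropWhile_cons_of_neg hp] at h
      cases h; simpa using hp

/-- Main spec for `gmax`: given a certificate `B ⊆ S` with `B ≤ T` pointwise,
the greedy choice succeeds, is in `S`, is `≤ T`, and dominates `B`. -/
lemma gmax_spec : ∀ (T S B : List (Fin n)), S.Pairwise (· > ·) →
    Forall₂ (· ≤ ·) B T → B <+ S →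
    gmax S T <+ S ∧ Forall₂ (· ≤ ·) (gmax S T) T ∧ Forall₂ (· ≤ ·) B (gmax S T) := by
  intro T
  induction T with
  | nil =>
    intro S B _ hBT _
    cases hBT
    simp [gmax_nil]
  | cons t T ih =>
    intro S B hS hBT hBS
    cases hBT with
    | cons hbt hBT' =>
      rename_i b B'
      have hbS : b ∈ S := hBS.subset (mem_cons_self)
      have hne : S.dropWhile (fun s => decide (t < s)) ≠ [] := by
        rw [Ne, List.dropWhile_eq_nil_iff]
        push_neg
        exact ⟨b, hbS, by simp [not_lt.2 hbt]⟩
      obtain ⟨s, rest, hd⟩ : ∃ s rest, S.dropWhile (fun s => decide (t < s)) = s :: rest := by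
        cases hcase : S.dropWhile (fun s => decide (t < s)) with
        | nil => exact absurd hcase hne
        | cons s rest => exact ⟨s, rest, rfl⟩
      have hsub : s :: rest <+ S := hd ▸ List.dropWhile_sublist _
      have hst : s ≤ t := by
        have := head_dropWhile_false hd
        simpa using this
      have hbs : b ≤ s := by
        have hsplit : b ∈ S.takeWhile (fun s => decide (t < s)) ++ (s :: rest) := by
          rw [← hd, List.takeWhile_append_dropWhile]; exact hbS
        rcases List.mem_append.1 hsplit with h | h
        · exact absurd (by simpa using List.mem_takeWhile_imp h) (not_lt.2 hbt)
        · rcases mem_cons.1 h with rfl | h'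
          · exact le_rfl
          · exact le_of_lt (rel_of_pairwise_cons (hS.sublist hsub) h')
      have hrest_sorted : rest.Pairwise (· > ·) := (hS.sublist hsub).of_cons
      have hBsorted : (b :: B').Pairwise (· > ·) := hS.sublist hBS
      have hB'rest : B' <+ rest := by
        apply sublist_of_subset_gt _ _ hBsorted.of_cons hrest_sorted
        intro x hx
        have hxb : x < b := rel_of_pairwise_cons hBsorted hx
        have hxS : x ∈ S := hBS.subset (mem_cons_of_mem b hx)
        have hsplit : x ∈ S.takeWhile (fun s => decide (t < s)) ++ (s :: rest) := by
          rw [← hd, List.takeWhile_append_dropWhile]; exact hxS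
        rcases List.mem_append.1 hsplit with h | h
        · exact absurd (by simpa using List.mem_takeWhile_imp h)
            (not_lt.2 (le_trans (le_of_lt hxb) hbt))
        · rcases mem_cons.1 h with rfl | h'
          · exact absurd (lt_of_lt_of_le hxb hbs) (lt_irrefl x)
          · exact h'
      obtain ⟨ih1, ih2, ih3⟩ := ih rest B' hrest_sorted hBT' hB'rest
      rw [gmax_cons, hd]
      exact ⟨(ih1.cons₂ s).trans hsub, Forall₂.cons hst ih2, Forall₂.cons hbs ih3⟩

/-- Main spec for `gmin`: mirror image. -/
lemma gmin_spec : ∀ (A C B : List (Fin n)), C.Pairwise (· < ·) →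
    Forall₂ (· ≤ ·) A B → B <+ C →
    gmin C A <+ C ∧ Forall₂ (· ≤ ·) A (gmin C A) ∧ Forall₂ (· ≤ ·) (gmin C A) B := by
  intro A
  induction A with
  | nil =>
    intro C B _ hAB _
    cases hAB
    simp [gmin_nil]
  | cons a A ih =>
    intro C B hC hAB hBC
    cases hAB with
    | cons hab hAB' =>
      rename_i b B'
      have hbC : b ∈ C := hBC.subset (mem_cons_self)
      have hne : C.dropWhile (fun c => decide (c < a)) ≠ [] := by
        rw [Ne, List.dropWhile_eq_nil_iff]
        push_neg
        exact ⟨b, hbC, by simp [not_lt.2 hab]⟩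
      obtain ⟨c, rest, hd⟩ : ∃ c rest, C.dropWhile (fun c => decide (c < a)) = c :: rest := by
        cases hcase : C.dropWhile (fun c => decide (c < a)) with
        | nil => exact absurd hcase hne
        | cons c rest => exact ⟨c, rest, rfl⟩
      have hsub : c :: rest <+ C := hd ▸ List.dropWhile_sublist _
      have hac : a ≤ c := by
        have := head_dropWhile_false hd
        simpa using this
      have hcb : c ≤ b := by
        have hsplit : b ∈ C.takeWhile (fun c => decide (c < a)) ++ (c :: rest) := by
          rw [← hd, List.takeWhile_append_dropWhile]; exact hbC
        rcases List.mem_append.1 hsplit with h | h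
        · exact absurd (by simpa using List.mem_takeWhile_imp h) (not_lt.2 hab)
        · rcases mem_cons.1 h with rfl | h'
          · exact le_rfl
          · exact le_of_lt (rel_of_pairwise_cons (hC.sublist hsub) h')
      have hrest_sorted : rest.Pairwise (· < ·) := (hC.sublist hsub).of_cons
      have hBsorted : (b :: B').Pairwise (· < ·) := hC.sublist hBC
      have hB'rest : B' <+ rest := by
        apply sublist_of_subset_lt _ _ hBsorted.of_cons hrest_sorted
        intro x hx
        have hxb : b < x := rel_of_pairwise_cons hBsorted hx
        have hxC : x ∈ C := hBC.subset (mem_cons_of_mem b hx)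
        have hsplit : x ∈ C.takeWhile (fun c => decide (c < a)) ++ (c :: rest) := by
          rw [← hd, List.takeWhile_append_dropWhile]; exact hxC
        rcases List.mem_append.1 hsplit with h | h
        · exact absurd (by simpa using List.mem_takeWhile_imp h)
            (not_lt.2 (le_trans hab (le_of_lt hxb)))
        · rcases mem_cons.1 h with rfl | h'
          · exact absurd (lt_of_le_of_lt hcb hxb) (lt_irrefl x)
          · exact h'
      obtain ⟨ih1, ih2, ih3⟩ := ih rest B' hrest_sorted hAB' hB'rest
      rw [gmin_cons, hd]
      exact ⟨(ih1.cons₂ c).trans hsub, Forall₂.cons hac ih2, Forall₂.cons hcb ih3⟩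

end S16
namespace S16
open List

variable {n : ℕ}

/-- Nestedness: the greedy maximum for a sub-column is contained in that for the column. -/
lemma gmax_nest : ∀ (N : ℕ) (S T T' : List (Fin n)), S.length ≤ N → T.Pairwise (· > ·) →
    T' <+ T → (gmax S T).length = T.length →
    (gmax S T').length = T'.length ∧ ∀ x ∈ gmax S T', x ∈ gmax S T := by
  intro N
  induction N with
  | zero =>
    intro S T T' hSN hT hsub hlen
    have hS : S = [] := List.length_eq_zero_iff.1 (Nat.le_zero.1 hSN)
    subst hS
    cases T with
    | nil =>
      have : T' = [] := List.sublist_nil.1 hsub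
      subst this; simp [gmax_nil]
    | cons t T₁ =>
      simp [gmax_cons] at hlen
  | succ N ihN =>
    intro S T T' hSN hT hsub hlen
    cases T' with
    | nil => simp [gmax_nil]
    | cons t' T₂ =>
      cases T with
      | nil => exact absurd (List.sublist_nil.1 hsub) (by simp)
      | cons t T₁ =>
        cases hd : S.dropWhile (fun s => decide (t < s)) with
        | nil => simp only [gmax_cons, hd, List.length_nil, List.length_cons] at hlen; omega
        | cons s rest =>
          simp only [gmax_cons, hd, List.length_cons] at hlen
          replace hlen : (gmax rest T₁).length = T₁.length := by omega
          have hrest : rest.length ≤ N := by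
            have h1 : (s :: rest).length ≤ S.length := (hd ▸ List.dropWhile_sublist _).length_le
            simp only [List.length_cons] at h1
            omega
          cases hsub with
          | cons_cons _ h =>
            simp only [gmax_cons, hd]
            obtain ⟨hl, hm⟩ := ihN rest T₁ T₂ hrest hT.of_cons h hlen
            refine ⟨by simpa using hl, fun x hx => ?_⟩
            rcases mem_cons.1 hx with rfl | hx'
            · exact mem_cons_self
            · exact mem_cons_of_mem _ (hm x hx')
          | cons _ h =>
            have ht'T₁ : t' ∈ T₁ := h.subset (mem_cons_self)
            have ht't : t' < t := rel_of_pairwise_cons hT ht'T₁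
            have key : S.dropWhile (fun s => decide (t' < s)) =
                (s :: rest).dropWhile (fun s => decide (t' < s)) := by
              rw [← hd]
              exact dropWhile_dropWhile (fun x hx => by
                simp only [decide_eq_true_eq] at *
                exact lt_trans ht't hx) S
            have hgoal : gmax S (t :: T₁) = s :: gmax rest T₁ := by
              simp only [gmax_cons, hd]
            rw [hgoal]
            by_cases hs : t' < s
            · have heq : gmax S (t' :: T₂) = gmax rest (t' :: T₂) := by
                rw [gmax_cons, key, List.dropWhile_cons_of_pos (by simpa using hs), ← gmax_cons]
              obtain ⟨hl, hm⟩ := ihN rest T₁ (t' :: T₂) hrest hT.of_cons h hlen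
              rw [heq]
              exact ⟨hl, fun x hx => mem_cons_of_mem _ (hm x hx)⟩
            · have heq : gmax S (t' :: T₂) = s :: gmax rest T₂ := by
                rw [gmax_cons, key, List.dropWhile_cons_of_neg (by simpa using hs)]
              have hT₂T₁ : T₂ <+ T₁ := (List.sublist_cons_self t' T₂).trans h
              obtain ⟨hl, hm⟩ := ihN rest T₁ T₂ hrest hT.of_cons hT₂T₁ hlen
              rw [heq]
              refine ⟨by simpa using hl, fun x hx => ?_⟩
              rcases mem_cons.1 hx with rfl | hx'
              · exact mem_cons_self
              · exact mem_cons_of_mem _ (hm x hx')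

/-- Greedy minimality clause for `gmin` (clause 4 of `isLhd`). -/
lemma gmin_min : ∀ (A C : List (Fin n)), C.Pairwise (· < ·) → A.Pairwise (· < ·) →
    (gmin C A).length = A.length →
    ∀ (k : ℕ) (hkA : k < A.length) (hkB : k < (gmin C A).length) (c : Fin n), c ∈ C →
      A[k]'hkA ≤ c → (∀ j (hj : j < (gmin C A).length), j < k → (gmin C A)[j]'hj < c) →
      (gmin C A)[k]'hkB ≤ c := by
  intro A
  induction A with
  | nil => intro C _ _ _ k hkA; simp at hkA
  | cons a A' ih =>
    intro C hC hA hlen k hkA hkB c hcC hac hjs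
    cases hd : C.dropWhile (fun x => decide (x < a)) with
    | nil => simp only [gmin_cons, hd, List.length_nil] at hkB; omega
    | cons d rest =>
      simp only [gmin_cons, hd] at hlen hkB hjs ⊢
      have hdrest_sub : d :: rest <+ C := hd ▸ List.dropWhile_sublist _
      have hdrest_sorted : (d :: rest).Pairwise (· < ·) := hC.sublist hdrest_sub
      match k, hkB with
      | 0, hkB =>
        have hcd : c ∈ d :: rest := by
          rw [← hd]
          exact mem_dropWhile_of_mem hcC (by
            simp only [decide_eq_false_iff_not, not_lt]
            simpa using hac)
        simp only [List.getElem_cons_zero]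
        rcases mem_cons.1 hcd with rfl | hcr
        · exact le_rfl
        · exact le_of_lt (rel_of_pairwise_cons hdrest_sorted hcr)
      | k+1, hkB =>
        have hdc : d < c := by
          have := hjs 0 (by simp) (Nat.succ_pos k)
          simpa using this
        have hkA' : k < A'.length := by simpa using hkA
        have haAk : a < A'[k]'hkA' := rel_of_pairwise_cons hA (List.getElem_mem _)
        have hack : A'[k]'hkA' ≤ c := by simpa using hac
        have hcrest : c ∈ rest := by
          have hsplit : c ∈ C.takeWhile (fun x => decide (x < a)) ++ (d :: rest) := by
            rw [← hd, List.takeWhile_append_dropWhile]; exact hcC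
          rcases List.mem_append.1 hsplit with h | h
          · have : c < a := by simpa using List.mem_takeWhile_imp h
            exact absurd (lt_trans this haAk) (not_lt.2 hack)
          · rcases mem_cons.1 h with rfl | h'
            · exact absurd hdc (lt_irrefl c)
            · exact h'
        have hrest_sorted : rest.Pairwise (· < ·) := hdrest_sorted.of_cons
        have hlen' : (gmin rest A').length = A'.length := by
          simp only [List.length_cons] at hlen; omega
        have hkB' : k < (gmin rest A').length := by
          simp only [List.length_cons] at hkB; omega
        have hjs' : ∀ j (hj : j < (gmin rest A').length), j < k → (gmin rest A')[j]'hj < c := by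
          intro j hj hjk
          have := hjs (j+1) (by simpa using Nat.succ_lt_succ hj) (Nat.succ_lt_succ hjk)
          simpa using this
        have := ih rest hrest_sorted hA.of_cons hlen' k hkA' hkB' c hcrest hack hjs'
        simpa using this

end S16
namespace S16
open List

variable {n : ℕ}

lemma ofFn_toFinset {m : ℕ} (b : Fin m → Fin n) :
    (List.ofFn b).toFinset = Finset.image b Finset.univ := by
  ext x
  simp [List.mem_ofFn, Set.mem_range]

lemma isLhd_facts {C A B : Finset (Fin n)} (h : isLhd n C A B) :
    B.card = A.card ∧ B ⊆ C ∧ setLEF n A B := by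
  obtain ⟨b, hmono, hmem, hdom, _, hB⟩ := h
  have hsor : (List.ofFn b).Pairwise (· < ·) := by
    rw [List.pairwise_ofFn]
    exact fun _ _ hab => hmono hab
  have hBasc : asc B = List.ofFn b := by
    rw [hB, ← ofFn_toFinset]
    exact asc_toFinset hsor
  have hcard : B.card = A.card := by
    rw [← asc_length, hBasc, List.length_ofFn]
  refine ⟨hcard, ?_, ?_⟩
  · intro x hx
    rw [hB] at hx
    obtain ⟨k, _, rfl⟩ := Finset.mem_image.1 hx
    exact hmem k
  · rw [setLEF_iff', hBasc, List.forall₂_iff_get]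
    refine ⟨by rw [asc_length, List.length_ofFn], fun i h₁ h₂ => ?_⟩
    have hiA : i < A.card := by rwa [asc_length] at h₁
    have hd := hdom ⟨i, hiA⟩
    rw [jthS A i hiA] at hd
    simp only [List.get_eq_getElem, List.getElem_ofFn]
    rw [Fin.le_def]
    omega

lemma isLhd_min {C A B B' : Finset (Fin n)} (h : isLhd n C A B) (hB'C : B' ⊆ C)
    (hAB' : setLEF n A B') : setLEF n B B' := by
  obtain ⟨b, hmono, hmem, hdom, hminim, hB⟩ := h
  have hsor : (List.ofFn b).Pairwise (· < ·) := by
    rw [List.pairwise_ofFn]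
    exact fun _ _ hab => hmono hab
  have hBasc : asc B = List.ofFn b := by
    rw [hB, ← ofFn_toFinset]
    exact asc_toFinset hsor
  have hcardAB' : A.card = B'.card := hAB'.1
  have hAB'f := setLEF_iff'.1 hAB'
  rw [List.forall₂_iff_get] at hAB'f
  obtain ⟨hlenAB', hgetAB'⟩ := hAB'f
  have key : ∀ (m : ℕ) (hm : m < A.card),
      b ⟨m, hm⟩ ≤ (asc B')[m]'(by rw [asc_length, ← hcardAB']; exact hm) := by
    intro m
    induction m using Nat.strong_induction_on with
    | _ m ih =>
      intro hm
      apply hminim ⟨m, hm⟩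
      · exact hB'C (mem_asc.1 (List.getElem_mem _))
      · rw [jthS A m hm]
        have := hgetAB' m (by rw [asc_length]; exact hm)
          (by rw [asc_length, ← hcardAB']; exact hm)
        simp only [List.get_eq_getElem] at this
        rw [Fin.le_def] at this
        omega
      · intro j hjk
        have hjm : j.val < m := hjk
        have h1 := ih j.val hjm j.isLt
        have h2 : (asc B')[j.val]'(by rw [asc_length, ← hcardAB']; exact j.isLt) <
            (asc B')[m]'(by rw [asc_length, ← hcardAB']; exact hm) := by
          have := (List.sortedLT_iff_pairwise.2 (asc_sorted B')).strictMono_get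
            (show (⟨j.val, by rw [asc_length, ← hcardAB']; exact j.isLt⟩ : Fin (asc B').length) <
              ⟨m, by rw [asc_length, ← hcardAB']; exact hm⟩ from hjm)
          simpa using this
        calc b j = b ⟨j.val, j.isLt⟩ := by rw [Fin.eta]
          _ ≤ _ := h1
          _ < _ := h2
  rw [setLEF_iff', hBasc, List.forall₂_iff_get]
  constructor
  · rw [List.length_ofFn, asc_length, ← hcardAB']
  · intro i h₁ h₂
    have hiA : i < A.card := by rwa [List.length_ofFn] at h₁
    have := key i hiA
    simp only [List.get_eq_getElem, List.getElem_ofFn]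
    exact this

lemma isLhd_exists (C A B' : Finset (Fin n)) (hB'C : B' ⊆ C) (hAB' : setLEF n A B') :
    ∃ B : Finset (Fin n), isLhd n C A B ∧ setLEF n B B' := by
  obtain ⟨hBlC, hABl, hBlB'⟩ := gmin_spec (asc A) (asc C) (asc B') (asc_sorted C)
    (setLEF_iff'.1 hAB') (asc_sublist_asc hB'C)
  set Bl := gmin (asc C) (asc A) with hBl
  have hBl_sorted : Bl.Pairwise (· < ·) := (asc_sorted C).sublist hBlC
  have hBllen : Bl.length = A.card := by
    rw [← hABl.length_eq, asc_length]
  have hascB : asc Bl.toFinset = Bl := asc_toFinset hBl_sorted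
  refine ⟨Bl.toFinset, ⟨fun k => Bl[k.val]'(by rw [hBllen]; exact k.isLt), ?_, ?_, ?_, ?_, ?_⟩, ?_⟩
  · -- StrictMono
    intro k l hkl
    beta_reduce
    have := (List.sortedLT_iff_pairwise.2 hBl_sorted).strictMono_get
      (show (⟨k.val, by rw [hBllen]; exact k.isLt⟩ : Fin Bl.length) <
        ⟨l.val, by rw [hBllen]; exact l.isLt⟩ from hkl)
    simpa using this
  · -- mem C
    intro k
    beta_reduce
    exact mem_asc.1 (hBlC.subset (List.getElem_mem _))
  · -- dominance
    intro k
    beta_reduce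
    rw [jthS A k.val k.isLt]
    have := (List.forall₂_iff_get.1 hABl).2 k.val (by rw [asc_length]; exact k.isLt)
      (by rw [hBllen]; exact k.isLt)
    simp only [List.get_eq_getElem] at this
    rw [Fin.le_def] at this
    omega
  · -- minimality
    intro k c hcC hjth hprev
    beta_reduce
    have hlen' : (gmin (asc C) (asc A)).length = (asc A).length := by
      rw [← hBl, hBllen, asc_length]
    have hres := gmin_min (asc A) (asc C) (asc_sorted C) (asc_sorted A) hlen' k.val
      (by rw [asc_length]; exact k.isLt) (by rw [← hBl, hBllen]; exact k.isLt) c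
      (mem_asc.2 hcC)
      (by
        rw [jthS A k.val k.isLt] at hjth
        rw [Fin.le_def]
        omega)
      (by
        intro j hj hjk
        have hjA : j < A.card := by rw [← hBl, hBllen] at hj; exact hj
        have := hprev ⟨j, hjA⟩ (by exact hjk)
        beta_reduce at this
        exact this)
    exact hres
  · -- B = image
    ext x
    simp only [List.mem_toFinset, Finset.mem_image, Finset.mem_univ, true_and]
    rw [List.mem_iff_getElem]
    constructor
    · rintro ⟨i, hi, rfl⟩
      exact ⟨⟨i, by rwa [hBllen] at hi⟩, rfl⟩
    · rintro ⟨k, rfl⟩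
      exact ⟨k.val, by rw [hBllen]; exact k.isLt, rfl⟩
  · rw [setLEF_iff', hascB]
    exact hBlB'

end S16
namespace S16
open List

variable {n : ℕ}

lemma col_one_supp (α : Fin n → ℕ) : col n α 1 = suppC n α := by
  ext i
  simp only [col, suppC, Finset.mem_filter, Finset.mem_univ, true_and]
  omega

lemma col_mono (α : Fin n → ℕ) {c c' : ℕ} (h : c ≤ c') : col n α c' ⊆ col n α c := by
  intro i hi
  simp only [col, Finset.mem_filter, Finset.mem_univ, true_and] at *
  omega

lemma col_shift (μ : Fin n → ℕ) (c : ℕ) (hc : 1 ≤ c) :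
    col n (fun i => μ i - 1) c = col n μ (c+1) := by
  ext i
  simp only [col, Finset.mem_filter, Finset.mem_univ, true_and]
  omega

lemma col_empty (α : Fin n → ℕ) (c : ℕ) (h : ∀ i, α i < c) : col n α c = ∅ := by
  ext i
  simp only [col, Finset.mem_filter, Finset.mem_univ, true_and, Finset.notMem_empty, iff_false]
  exact fun hc => absurd (h i) (not_lt.2 hc)

/-- The columns of the Bruhat maximum. -/
def Gfin (S : Finset (Fin n)) (α : Fin n → ℕ) (c : ℕ) : Finset (Fin n) :=
  (gmax (dsc S) (dsc (col n α c))).toFinset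

lemma Gfin_spec (S : Finset (Fin n)) (α : Fin n → ℕ) (c : ℕ)
    (hcert : ∃ B : Finset (Fin n), B ⊆ S ∧ setLEF n B (col n α c)) :
    dsc (Gfin S α c) = gmax (dsc S) (dsc (col n α c)) ∧
    (Gfin S α c).card = (col n α c).card ∧
    Gfin S α c ⊆ S ∧ setLEF n (Gfin S α c) (col n α c) ∧
    ∀ B : Finset (Fin n), B ⊆ S → setLEF n B (col n α c) → setLEF n B (Gfin S α c) := by
  obtain ⟨B₀, hB₀S, hB₀⟩ := hcert
  obtain ⟨h1, h2, _⟩ := gmax_spec (dsc (col n α c)) (dsc S) (dsc B₀) (dsc_sorted S)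
    (setLEF_iff.1 hB₀) (dsc_sublist_dsc hB₀S)
  have hsor : (gmax (dsc S) (dsc (col n α c))).Pairwise (· > ·) := (dsc_sorted S).sublist h1
  have hdsc : dsc (Gfin S α c) = gmax (dsc S) (dsc (col n α c)) := dsc_toFinset hsor
  have hcard : (Gfin S α c).card = (col n α c).card := by
    rw [← dsc_length, hdsc, h2.length_eq, dsc_length]
  refine ⟨hdsc, hcard, ?_, ?_, ?_⟩
  · intro x hx
    exact mem_dsc.1 (h1.subset (List.mem_toFinset.1 hx))
  · rw [setLEF_iff, hdsc]
    exact h2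
  · intro B hBS hBc
    rw [setLEF_iff, hdsc]
    exact (gmax_spec _ _ (dsc B) (dsc_sorted S) (setLEF_iff.1 hBc) (dsc_sublist_dsc hBS)).2.2

lemma Gfin_nest (S : Finset (Fin n)) (α : Fin n → ℕ) (c : ℕ)
    (hgood : (gmax (dsc S) (dsc (col n α c))).length = (dsc (col n α c)).length) :
    Gfin S α (c+1) ⊆ Gfin S α c := by
  have hsub : dsc (col n α (c+1)) <+ dsc (col n α c) :=
    dsc_sublist_dsc (col_mono α (Nat.le_succ c))
  obtain ⟨_, hmem⟩ := gmax_nest (dsc S).length (dsc S) (dsc (col n α c)) (dsc (col n α (c+1)))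
    le_rfl (dsc_sorted _) hsub hgood
  intro x hx
  exact List.mem_toFinset.2 (hmem x (List.mem_toFinset.1 hx))

lemma Gfin_empty (S : Finset (Fin n)) (α : Fin n → ℕ) (c : ℕ) (h : col n α c = ∅) :
    Gfin S α c = ∅ := by
  rw [Gfin, h]
  have : dsc (∅ : Finset (Fin n)) = [] := by rw [dsc, Finset.sort_empty, List.reverse_nil]
  rw [this, gmax_nil]
  rfl

lemma lhdChain_cons (C : Finset (Fin n)) (l : List (Finset (Fin n))) (hl : l ≠ [])
    (B : Finset (Fin n)) :
    lhdChain n (C :: l) B ↔ ∃ B', lhdChain n l B' ∧ isLhd n C B' B := by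
  cases l with
  | nil => exact absurd rfl hl
  | cons D rest => rw [lhdChain]

lemma lhdChain_singleton (C B : Finset (Fin n)) : lhdChain n [C] B ↔ B = C := by
  rw [lhdChain]

lemma range_map_L (L : ℕ → Finset (Fin n)) (c : ℕ) :
    (List.range (c+1)).map (fun i => L (i+1)) = L 1 :: (List.range c).map (fun i => L (i+1+1)) := by
  rw [List.range_succ_eq_map, List.map_cons, List.map_map]
  congr 1

end S16
namespace S16
open List

variable {n : ℕ}

lemma jth_le_of_subset {U V : Finset (Fin n)} (h : U ⊆ V) (k : ℕ) (hk : k < U.card) :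
    jthLargestF n U k ≤ jthLargestF n V k := by
  have hsub := dsc_sublist_dsc h
  have hkV : k < V.card := lt_of_lt_of_le hk (Finset.card_le_card h)
  rw [jthL U k hk, jthL V k hkV]
  have := sublist_get_le hsub (dsc_sorted V) k (by rwa [dsc_length]) (by rwa [dsc_length])
  exact Nat.succ_le_succ (Fin.le_def.1 this)

lemma mu_col (G : ℕ → Finset (Fin n)) (N : ℕ)
    (hnest : ∀ c, 1 ≤ c → G (c+1) ⊆ G c) (hemp : ∀ c, N ≤ c → G c = ∅) :
    ∀ c, 1 ≤ c →
      col n (fun i => ((Finset.range N).filter (fun c' => i ∈ G (c'+1))).card) c = G c := by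
  have hanti : ∀ a b, 1 ≤ a → a ≤ b → G b ⊆ G a := by
    intro a b ha hab
    induction b, hab using Nat.le_induction with
    | base => exact fun x hx => hx
    | succ b hab ih => exact fun x hx => ih (hnest b (le_trans ha hab) hx)
  intro c hc
  ext i
  simp only [col, Finset.mem_filter, Finset.mem_univ, true_and]
  constructor
  · intro hle
    by_contra hni
    have hsub : (Finset.range N).filter (fun c' => i ∈ G (c'+1)) ⊆ Finset.range (c-1) := by
      intro c' hc'
      simp only [Finset.mem_filter, Finset.mem_range] at hc' ⊢
      by_contra hcc
      push_neg at hcc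
      exact hni (hanti c (c'+1) hc (by omega) hc'.2)
    have := Finset.card_le_card hsub
    rw [Finset.card_range] at this
    omega
  · intro hi
    have hcN : c ≤ N := by
      by_contra hcN
      push_neg at hcN
      rw [hemp c (le_of_lt hcN)] at hi
      exact absurd hi (Finset.notMem_empty i)
    have hsub : Finset.range c ⊆ (Finset.range N).filter (fun c' => i ∈ G (c'+1)) := by
      intro c' hc'
      simp only [Finset.mem_range] at hc'
      simp only [Finset.mem_filter, Finset.mem_range]
      exact ⟨by omega, hanti (c'+1) c (by omega) (by omega) hi⟩
    have := Finset.card_le_card hsub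
    rwa [Finset.card_range] at this

lemma chain_list_ne (L : ℕ → Finset (Fin n)) (c : ℕ) (hc : 1 ≤ c) :
    (List.range c).map (fun i => L (i+1+1)) ≠ [] := by
  intro hnil
  apply_fun List.length at hnil
  simp at hnil
  omega

lemma forward (α : Fin n → ℕ) (L E : ℕ → Finset (Fin n)) (h : memRSVT n α L E) :
    Disjoint (L 1) (E 1) ∧ setLEF n (L 1) (suppC n α) ∧
    (∀ e ∈ E 1,
      ((L 2).filter (fun l => e < l)).card < ((L 1).filter (fun l => e < l)).card) ∧
    (∃ μ : Fin n → ℕ, isBruhatMax n α (L 1) μ ∧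
      memRSVT n (fun i => μ i - 1) (fun c => L (c+1)) (fun c => E (c+1))) := by
  obtain ⟨hdisj, hcard, hcoldec, hextra, hchain⟩ := h
  have hS1 : setLEF n (L 1) (col n α 1) := by
    obtain ⟨B, hB, hBle⟩ := hchain 1 le_rfl
    have hlist : (List.range 1).map (fun i => L (i+1)) = [L 1] := by
      rfl
    rw [hlist, lhdChain_singleton] at hB
    rwa [hB] at hBle
  have hsupp : setLEF n (L 1) (suppC n α) := by rwa [col_one_supp] at hS1
  -- certificates for each column
  have hcert : ∀ c, 1 ≤ c → ∃ B : Finset (Fin n), B ⊆ L 1 ∧ setLEF n B (col n α c) := by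
    intro c hc
    rcases eq_or_lt_of_le hc with rfl | hc2
    · exact ⟨L 1, Finset.Subset.refl _, hS1⟩
    · obtain ⟨c', rfl⟩ : ∃ c', c = c' + 1 := ⟨c - 1, by omega⟩
      have hc' : 1 ≤ c' := by omega
      obtain ⟨B, hB, hBle⟩ := hchain (c'+1) (by omega)
      rw [range_map_L, lhdChain_cons _ _ (chain_list_ne L c' hc')] at hB
      obtain ⟨B', _, hlhd⟩ := hB
      exact ⟨B, (isLhd_facts hlhd).2.1, hBle⟩
  have spec := fun c (hc : 1 ≤ c) => Gfin_spec (L 1) α c (hcert c hc)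
  have hgood : ∀ c, 1 ≤ c →
      (gmax (dsc (L 1)) (dsc (col n α c))).length = (dsc (col n α c)).length := by
    intro c hc
    rw [← (spec c hc).1, dsc_length, dsc_length, (spec c hc).2.1]
  set N : ℕ := Finset.univ.sup α + 1 with hN
  have hNcol : ∀ c, N ≤ c → col n α c = ∅ := by
    intro c hNc
    apply col_empty
    intro i
    have : α i ≤ Finset.univ.sup α := Finset.le_sup (Finset.mem_univ i)
    omega
  set μ : Fin n → ℕ :=
    fun i => ((Finset.range N).filter (fun c' => i ∈ Gfin (L 1) α (c'+1))).card with hμ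
  have hcolμ : ∀ c, 1 ≤ c → col n μ c = Gfin (L 1) α c := by
    apply mu_col
    · intro c hc
      exact Gfin_nest (L 1) α c (hgood c hc)
    · intro c hNc
      exact Gfin_empty (L 1) α c (hNcol c hNc)
  have hbrmax : isBruhatMax n α (L 1) μ := by
    refine ⟨?_, ?_, ?_⟩
    · intro c hc
      rw [hcolμ c hc]
      exact (spec c hc).2.2.2.1
    · rw [← col_one_supp, hcolμ 1 le_rfl]
      exact (spec 1 le_rfl).2.2.1
    · intro γ hγ hγsupp c hc
      rw [hcolμ c hc]
      refine (spec c hc).2.2.2.2 (col n γ c) ?_ (hγ c hc)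
      intro x hx
      exact hγsupp ((col_one_supp γ) ▸ (col_mono γ hc hx))
  refine ⟨hdisj 1 le_rfl, hsupp, by simpa using hextra 1 le_rfl, μ, hbrmax, ?_, ?_, ?_, ?_, ?_⟩
  · -- disjoint
    intro c hc
    simpa using hdisj (c+1) (by omega)
  · -- cards
    intro c hc
    have h1 : col n (fun i => μ i - 1) c = col n μ (c+1) := col_shift μ c hc
    have h2 := hcolμ (c+1) (by omega)
    have h3 := (spec (c+1) (by omega)).2.1
    have h4 := hcard (c+1) (by omega)
    simp only [h1, h2, h3]
    simpa using h4
  · -- column decrease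
    intro c hc k hk
    simpa using hcoldec (c+1) (by omega) k (by simpa using hk)
  · -- extra entries
    intro c hc e he
    simpa using hextra (c+1) (by omega) e (by simpa using he)
  · -- left key condition
    intro c hc
    obtain ⟨B, hB, hBle⟩ := hchain (c+1) (by omega)
    rw [range_map_L, lhdChain_cons _ _ (chain_list_ne L c hc)] at hB
    obtain ⟨B', hB', hlhd⟩ := hB
    obtain ⟨_, hBsub, hdom⟩ := isLhd_facts hlhd
    refine ⟨B', ?_, ?_⟩
    · exact hB'
    · have hmaxB : setLEF n B (Gfin (L 1) α (c+1)) :=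
        (spec (c+1) (by omega)).2.2.2.2 B hBsub hBle
      have : setLEF n B' (Gfin (L 1) α (c+1)) := setLEF_trans hdom hmaxB
      rw [col_shift μ c hc, hcolμ (c+1) (by omega)]
      exact this

lemma backward (α : Fin n → ℕ) (L E : ℕ → Finset (Fin n))
    (hdisj1 : Disjoint (L 1) (E 1)) (hsupp : setLEF n (L 1) (suppC n α))
    (hextra1 : ∀ e ∈ E 1,
      ((L 2).filter (fun l => e < l)).card < ((L 1).filter (fun l => e < l)).card)
    (μ : Fin n → ℕ) (hmax : isBruhatMax n α (L 1) μ)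
    (ht : memRSVT n (fun i => μ i - 1) (fun c => L (c+1)) (fun c => E (c+1))) :
    memRSVT n α L E := by
  obtain ⟨hbr, hsuppμ, _⟩ := hmax
  obtain ⟨ht1, ht2, ht3, ht4, ht5⟩ := ht
  have hcolμ1 : ∀ c', 1 ≤ c' → col n (fun i => μ i - 1) c' = col n μ (c'+1) :=
    fun c' hc' => col_shift μ c' hc'
  have hμsub : ∀ c', 1 ≤ c' → col n μ c' ⊆ L 1 := by
    intro c' hc' x hx
    exact hsuppμ ((col_one_supp μ) ▸ (col_mono μ hc' hx))
  refine ⟨?_, ?_, ?_, ?_, ?_⟩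
  · -- disjoint
    intro c hc
    obtain ⟨c', rfl⟩ : ∃ c', c = c' + 1 := ⟨c - 1, by omega⟩
    rcases Nat.eq_zero_or_pos c' with rfl | hc'
    · exact hdisj1
    · simpa using ht1 c' hc'
  · -- cards
    intro c hc
    obtain ⟨c', rfl⟩ : ∃ c', c = c' + 1 := ⟨c - 1, by omega⟩
    rcases Nat.eq_zero_or_pos c' with rfl | hc'
    · rw [col_one_supp]
      exact setLEF_card hsupp
    · have := ht2 c' hc'
      rw [hcolμ1 c' hc'] at this
      have h2 := setLEF_card (hbr (c'+1) (by omega))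
      simpa [h2] using this
  · -- column decrease
    intro c hc k hk
    obtain ⟨c', rfl⟩ : ∃ c', c = c' + 1 := ⟨c - 1, by omega⟩
    rcases Nat.eq_zero_or_pos c' with rfl | hc'
    · -- c = 1 : L 2 vs L 1
      have hL2 : setLEF n (L 2) (col n μ 2) := by
        obtain ⟨B, hB, hBle⟩ := ht5 1 le_rfl
        have hlist : (List.range 1).map (fun i => L (i+1+1)) = [L 2] := by
          rfl
        rw [show (List.range 1).map (fun i => (fun c => L (c+1)) (i+1)) =
          (List.range 1).map (fun i => L (i+1+1)) from rfl, hlist, lhdChain_singleton] at hB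
        rw [hB] at hBle
        rwa [hcolμ1 1 le_rfl] at hBle
      have hk2 : k < (L 2).card := by simpa using hk
      have hstep1 : jthLargestF n (L 2) k ≤ jthLargestF n (col n μ 2) k := hL2.2 k hk2
      have hstep2 : jthLargestF n (col n μ 2) k ≤ jthLargestF n (L 1) k := by
        apply jth_le_of_subset (hμsub 2 (by omega)) k
        rw [← setLEF_card hL2]
        exact hk2
      simpa using le_trans hstep1 hstep2
    · have := ht3 c' hc' k (by simpa using hk)
      simpa using this
  · -- extra entries
    intro c hc e he
    obtain ⟨c', rfl⟩ : ∃ c', c = c' + 1 := ⟨c - 1, by omega⟩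
    rcases Nat.eq_zero_or_pos c' with rfl | hc'
    · simpa using hextra1 e (by simpa using he)
    · simpa using ht4 c' hc' e (by simpa using he)
  · -- left key
    intro c hc
    obtain ⟨c', rfl⟩ : ∃ c', c = c' + 1 := ⟨c - 1, by omega⟩
    rcases Nat.eq_zero_or_pos c' with rfl | hc'
    · refine ⟨L 1, ?_, by rw [col_one_supp]; exact hsupp⟩
      have hlist : (List.range 1).map (fun i => L (i+1)) = [L 1] := by
        rfl
      rw [hlist, lhdChain_singleton]
    · obtain ⟨B', hB', hB'le⟩ := ht5 c' hc'
      rw [hcolμ1 c' hc'] at hB'le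
      obtain ⟨B, hlhd, hBle⟩ := isLhd_exists (L 1) B' (col n μ (c'+1))
        (hμsub (c'+1) (by omega)) hB'le
      refine ⟨B, ?_, setLEF_trans hBle (hbr (c'+1) (by omega))⟩
      rw [range_map_L, lhdChain_cons _ _ (chain_list_ne L c' hc')]
      exact ⟨B', hB', hlhd⟩

end S16
/-- recursive description of `RSVT(α)`. A diagram pair `(L 1, E 1, t)`
(where `t` has columns `L (c+1), E (c+1)`) is in `RSVT(α)` iff: `L 1, E 1` are disjoint;
`L 1 ≤ supp α`; for each `e ∈ E 1`, `|(e,n] ∩ L 1| > |(e,n] ∩ L 2|`; and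
`t ∈ RSVT(M̄(α, L 1))`. -/
theorem stmt16 (n : ℕ) (α : Fin n → ℕ) (L E : ℕ → Finset (Fin n)) :
    memRSVT n α L E ↔
      (Disjoint (L 1) (E 1) ∧
       setLEF n (L 1) (suppC n α) ∧
       (∀ e ∈ E 1,
         ((L 2).filter (fun l => e < l)).card < ((L 1).filter (fun l => e < l)).card) ∧
       (∃ μ : Fin n → ℕ, isBruhatMax n α (L 1) μ ∧
         memRSVT n (fun i => μ i - 1) (fun c => L (c+1)) (fun c => E (c+1)))) := by
  constructor
  · exact fun h => S16.forward α L E h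
  · rintro ⟨h1, h2, h3, μ, h4, h5⟩
    exact S16.backward α L E h1 h2 h3 μ h4 h5
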